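/- Let 0 < α < 1, n ≥ 2, let I ⊆ [n] be nonempty, and let s > 0. Then there is no choice of finite dimensions d₁,…,dₙ and density matrix ρ on ℂ^{d₁} ⊗ ⋯ ⊗ ℂ^{dₙ} with S_α(ρ_I) = s and S_α(ρ_J) = 0 for all nonempty J ⊆ [n] with J ≠ I. (In particular, the set Σ_α^n of exactly attainable entropy vectors is not closed for n ≥ 2.) -/

import Mathlib

noncomputable section
open scoped ComplexOrder

/-- A density matrix: positive semidefinite with unit trace. -/
def IsDensityMatrix {ι : Type*} [Fintype ι] (ρ : Matrix ι ι ℂ) : Prop :=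
  ρ.PosSemidef ∧ ρ.trace = 1

/-- Reduced state (partial trace) of a multipartite matrix on the parties in `I`. -/
def reduce {n : ℕ} {d : Fin n → ℕ}
    (ρ : Matrix (∀ i, Fin (d i)) (∀ i, Fin (d i)) ℂ) (I : Finset (Fin n)) :
    Matrix (∀ i : {i : Fin n // i ∈ I}, Fin (d i.1))
           (∀ i : {i : Fin n // i ∈ I}, Fin (d i.1)) ℂ :=
  fun x x' => ∑ y : ∀ j : {j : Fin n // j ∉ I}, Fin (d j.1),
    ρ (fun i => if h : i ∈ I then x ⟨i, h⟩ else y ⟨i, h⟩)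
      (fun i => if h : i ∈ I then x' ⟨i, h⟩ else y ⟨i, h⟩)

/-- Rényi α-entropy (base 2) of a (Hermitian) matrix, via its eigenvalues. -/
def renyiS {ι : Type*} [Fintype ι] [DecidableEq ι] (α : ℝ) (ρ : Matrix ι ι ℂ) : ℝ :=
  if h : ρ.IsHermitian then (1 / (1 - α)) * Real.logb 2 (∑ i, h.eigenvalues i ^ α) else 0


/-! ### Auxiliary spectral lemmas -/

open Matrix Complex

lemma RAA.trace_eq_sum_eig {ι : Type*} [Fintype ι] [DecidableEq ι] (σ : Matrix ι ι ℂ)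
    (h : σ.IsHermitian) : σ.trace = ∑ i, (h.eigenvalues i : ℂ) := by
  conv_lhs => rw [h.spectral_theorem, Unitary.conjStarAlgAut_apply]
  rw [Matrix.trace_mul_cycle,
    show star (h.eigenvectorUnitary : Matrix ι ι ℂ) * (h.eigenvectorUnitary : Matrix ι ι ℂ) = 1
      from Matrix.mem_unitaryGroup_iff'.mp h.eigenvectorUnitary.2, one_mul, Matrix.trace_diagonal]
  rfl

namespace RAA
variable {ι : Type*} [Fintype ι] [DecidableEq ι] {α : ℝ} {σ : Matrix ι ι ℂ}

lemma density_sum_eig (hσ : IsDensityMatrix σ) : ∑ i, hσ.1.1.eigenvalues i = 1 := by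
  have h := RAA.trace_eq_sum_eig σ hσ.1.1
  have h2 : ((∑ i, hσ.1.1.eigenvalues i : ℝ) : ℂ) = 1 := by
    push_cast
    rw [← h]
    exact hσ.2
  exact_mod_cast h2

/-- spectral form of a density matrix with 0/1 eigenvalues -/
lemma density_vecMulVec_of_eigs (hσ : IsDensityMatrix σ)
    (h : ∃ i0, hσ.1.1.eigenvalues i0 = 1 ∧ ∀ j, j ≠ i0 → hσ.1.1.eigenvalues j = 0) :
    ∃ a : ι → ℂ, σ = Matrix.vecMulVec a (star a) := by
  obtain ⟨i0, h1, h2⟩ := h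
  refine ⟨fun x => (hσ.1.1.eigenvectorUnitary : Matrix ι ι ℂ) x i0, ?_⟩
  ext x x'
  conv_lhs => rw [hσ.1.1.spectral_theorem, Unitary.conjStarAlgAut_apply]
  rw [Matrix.mul_apply, Matrix.vecMulVec_apply]
  rw [Finset.sum_eq_single i0]
  · rw [Matrix.mul_diagonal, Matrix.star_apply]
    simp [h1]
  · intro j _ hj
    rw [Matrix.mul_diagonal]
    simp [h2 j hj]
  · simp

lemma renyi_zero_of_eigs (hα0 : 0 < α) (hH : σ.IsHermitian)
    (h : ∃ i0, hH.eigenvalues i0 = 1 ∧ ∀ j, j ≠ i0 → hH.eigenvalues j = 0) :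
    renyiS α σ = 0 := by
  obtain ⟨i0, h1, h2⟩ := h
  rw [renyiS, dif_pos hH]
  have hT : ∑ i, hH.eigenvalues i ^ α = 1 := by
    rw [Finset.sum_eq_single i0]
    · rw [h1, Real.one_rpow]
    · intro j _ hj
      rw [h2 j hj, Real.zero_rpow hα0.ne']
    · simp
  rw [hT, Real.logb_one, mul_zero]

lemma eigs_of_rank_le_one (hσ : IsDensityMatrix σ) (hr : σ.rank ≤ 1) :
    ∃ i0, hσ.1.1.eigenvalues i0 = 1 ∧ ∀ j, j ≠ i0 → hσ.1.1.eigenvalues j = 0 := by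
  set lam := hσ.1.1.eigenvalues with hlam
  have hcard : Fintype.card {i // lam i ≠ 0} ≤ 1 := by
    rw [← hσ.1.1.rank_eq_card_non_zero_eigs]
    exact hr
  have hsum : ∑ i, lam i = 1 := density_sum_eig hσ
  obtain ⟨i0, -, hi0⟩ := Finset.exists_ne_zero_of_sum_ne_zero
    (show ∑ i, lam i ≠ 0 by rw [hsum]; norm_num)
  have hz : ∀ j, j ≠ i0 → lam j = 0 := by
    intro j hj
    by_contra hjz
    have : Nontrivial {i // lam i ≠ 0} :=
      ⟨⟨⟨i0, hi0⟩, ⟨j, hjz⟩, by simp [Subtype.ext_iff, Ne.symm hj]⟩⟩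
    have := Fintype.one_lt_card (α := {i // lam i ≠ 0})
    omega
  exact ⟨i0, (Finset.sum_eq_single i0 (fun j _ hj => hz j hj) (by simp)).symm.trans hsum, hz⟩

lemma eigs_of_renyi_zero (hσ : IsDensityMatrix σ) (hα0 : 0 < α) (hα1 : α < 1)
    (h0 : renyiS α σ = 0) :
    ∃ i0, hσ.1.1.eigenvalues i0 = 1 ∧ ∀ j, j ≠ i0 → hσ.1.1.eigenvalues j = 0 := by
  set lam := hσ.1.1.eigenvalues with hlam
  have hnn : ∀ i, 0 ≤ lam i := fun i => hσ.1.eigenvalues_nonneg i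
  have hsum : ∑ i, lam i = 1 := density_sum_eig hσ
  rw [renyiS, dif_pos hσ.1.1] at h0
  have hlogb : Real.logb 2 (∑ i, lam i ^ α) = 0 := by
    rcases mul_eq_zero.mp h0 with h | h
    · exact absurd h (one_div_ne_zero (by linarith))
    · exact h
  have hle1 : ∀ i, lam i ≤ 1 := by
    intro i
    rw [← hsum]
    exact Finset.single_le_sum (fun j _ => hnn j) (Finset.mem_univ i)
  have hterm : ∀ i ∈ Finset.univ, lam i ≤ lam i ^ α := by
    intro i _
    rcases eq_or_lt_of_le (hnn i) with h | h
    · rw [← h, Real.zero_rpow hα0.ne']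
    · calc lam i = lam i ^ (1:ℝ) := (Real.rpow_one _).symm
        _ ≤ lam i ^ α := Real.rpow_le_rpow_of_exponent_ge h (hle1 i) hα1.le
  have hTpos : 0 < ∑ i, lam i ^ α := by
    obtain ⟨i, -, hi⟩ := Finset.exists_ne_zero_of_sum_ne_zero
      (show ∑ i, lam i ≠ 0 by rw [hsum]; norm_num)
    have h1 : (0:ℝ) < lam i ^ α := Real.rpow_pos_of_pos (lt_of_le_of_ne (hnn i) (Ne.symm hi)) _
    exact lt_of_lt_of_le h1 (Finset.single_le_sum
      (fun j _ => Real.rpow_nonneg (hnn j) α) (Finset.mem_univ i))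
  have hT1 : ∑ i, lam i ^ α = 1 := by
    rcases Real.logb_eq_zero.mp hlogb with h | h | h | h | h | h
    · norm_num at h
    · norm_num at h
    · norm_num at h
    · exact absurd h hTpos.ne'
    · exact h
    · exfalso; linarith
  have heach := (Finset.sum_eq_sum_iff_of_le hterm).mp (by rw [hT1, hsum])
  have h01 : ∀ i, lam i = 0 ∨ lam i = 1 := by
    intro i
    rcases eq_or_lt_of_le (hnn i) with h | hpos
    · exact Or.inl h.symm
    rcases eq_or_lt_of_le (hle1 i) with h | hlt
    · exact Or.inr h
    exfalso
    have hgt := Real.rpow_lt_rpow_of_exponent_gt hpos hlt hα1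
    rw [Real.rpow_one] at hgt
    have := heach i (Finset.mem_univ i)
    linarith
  obtain ⟨i0, -, hi0⟩ := Finset.exists_ne_zero_of_sum_ne_zero
    (show ∑ i, lam i ≠ 0 by rw [hsum]; norm_num)
  have hi01 : lam i0 = 1 := (h01 i0).resolve_left hi0
  refine ⟨i0, hi01, fun j hj => ?_⟩
  have herase : ∑ x ∈ Finset.univ.erase i0, lam x = 0 := by
    have h := Finset.add_sum_erase Finset.univ lam (Finset.mem_univ i0)
    rw [hsum, hi01] at h
    linarith
  exact (Finset.sum_eq_zero_iff_of_nonneg (fun j _ => hnn j)).mp herase j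
    (Finset.mem_erase.mpr ⟨hj, Finset.mem_univ j⟩)

end RAA

/-! ### Bipartite partial traces -/

def rFst {A B : Type*} [Fintype B] (ρ : Matrix (A × B) (A × B) ℂ) : Matrix A A ℂ :=
  fun x x' => ∑ y, ρ (x, y) (x', y)
def rSnd {A B : Type*} [Fintype A] (ρ : Matrix (A × B) (A × B) ℂ) : Matrix B B ℂ :=
  fun y y' => ∑ x, ρ (x, y) (x, y')

namespace RAA
section Bipartite
variable {A B : Type*} [Fintype A] [Fintype B]

lemma trace_rFst (ρ : Matrix (A × B) (A × B) ℂ) : (rFst ρ).trace = ρ.trace := by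
  simp [Matrix.trace, Matrix.diag, rFst, Fintype.sum_prod_type]

lemma posSemidef_rFst {ρ : Matrix (A × B) (A × B) ℂ} (h : ρ.PosSemidef) :
    (rFst ρ).PosSemidef := by
  have he : rFst ρ = ∑ y : B, ρ.submatrix (fun x => (x, y)) (fun x => (x, y)) := by
    ext x x'
    simp [rFst, Matrix.sum_apply]
  rw [he]
  exact Finset.sum_induction _ _ (fun a b ha hb => ha.add hb) Matrix.PosSemidef.zero
    (fun y _ => h.submatrix _)

lemma density_rFst {ρ : Matrix (A × B) (A × B) ℂ} (h : IsDensityMatrix ρ) :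
    IsDensityMatrix (rFst ρ) :=
  ⟨posSemidef_rFst h.1, by rw [trace_rFst, h.2]⟩

private lemma quad_eval [DecidableEq A] [DecidableEq B]
    (ρ : Matrix (A × B) (A × B) ℂ) (v : A → ℂ) (y' : B) :
    star (fun p : A × B => if p.2 = y' then v p.1 else 0) ⬝ᵥ
      ρ *ᵥ (fun p : A × B => if p.2 = y' then v p.1 else 0) =
      ∑ x, ∑ x', (starRingEnd ℂ) (v x) * ρ (x, y') (x', y') * v x' := by
  simp only [dotProduct, Matrix.mulVec, Pi.star_apply, Fintype.sum_prod_type,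
    mul_ite, ite_mul, mul_zero, zero_mul, Finset.sum_ite_eq', Finset.mem_univ, if_true,
    apply_ite (star : ℂ → ℂ), star_zero, map_zero]
  simp [Finset.mul_sum, mul_assoc, Complex.star_def]

lemma rel_of_rFst_pure [DecidableEq A] [DecidableEq B] {ρ : Matrix (A × B) (A × B) ℂ}
    (h : ρ.PosSemidef) {a : A → ℂ}
    (ha : rFst ρ = Matrix.vecMulVec a (star a)) :
    ∀ (w : A × B) (x₁ x₂ : A) (y : B),
      (starRingEnd ℂ) (a x₂) * ρ w (x₁, y) = (starRingEnd ℂ) (a x₁) * ρ w (x₂, y) := by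
  intro w x₁ x₂ y
  rcases eq_or_ne x₁ x₂ with rfl | hne
  · rfl
  set v : A → ℂ := fun x => if x = x₁ then (starRingEnd ℂ) (a x₂)
    else if x = x₂ then -((starRingEnd ℂ) (a x₁)) else 0 with hv
  set u : B → (A × B → ℂ) := fun y' p => if p.2 = y' then v p.1 else 0 with hu
  have key : ∀ y' : B, star (u y') ⬝ᵥ ρ *ᵥ u y' =
      ∑ x, ∑ x', (starRingEnd ℂ) (v x) * ρ (x, y') (x', y') * v x' :=
    fun y' => quad_eval ρ v y'
  have hvsum : ∑ x, (starRingEnd ℂ) (v x) * a x = 0 := by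
    have h1 : ∀ x, (starRingEnd ℂ) (v x) * a x
        = (if x = x₁ then a x₂ * a x else 0) + (if x = x₂ then -(a x₁ * a x) else 0) := by
      intro x
      simp only [hv]
      split_ifs <;> simp_all
    rw [Finset.sum_congr rfl (fun x _ => h1 x), Finset.sum_add_distrib]
    simp [Finset.sum_ite_eq']
    ring
  have hsum0 : ∑ y' : B, star (u y') ⬝ᵥ ρ *ᵥ u y' = 0 := by
    rw [Finset.sum_congr rfl (fun y' _ => key y')]
    rw [Finset.sum_comm]
    have : ∀ x, ∑ y' : B, ∑ x', (starRingEnd ℂ) (v x) * ρ (x, y') (x', y') * v x'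
        = ∑ x', (starRingEnd ℂ) (v x) * rFst ρ x x' * v x' := by
      intro x
      rw [Finset.sum_comm]
      refine Finset.sum_congr rfl (fun x' _ => ?_)
      rw [rFst]
      rw [Finset.mul_sum, Finset.sum_mul]
    rw [Finset.sum_congr rfl (fun x _ => this x)]
    rw [ha]
    have : ∀ x x', (starRingEnd ℂ) (v x) * (Matrix.vecMulVec a (star a)) x x' * v x'
        = ((starRingEnd ℂ) (v x) * a x) * ((starRingEnd ℂ) (a x') * v x') := by
      intro x x'
      rw [Matrix.vecMulVec_apply]
      simp [Pi.star_apply]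
      ring
    rw [Finset.sum_congr rfl fun x _ => Finset.sum_congr rfl fun x' _ => this x x']
    rw [← Finset.sum_mul_sum]
    rw [hvsum, zero_mul]
  have hterm0 : star (u y) ⬝ᵥ ρ *ᵥ u y = 0 :=
    (Finset.sum_eq_zero_iff_of_nonneg (fun y' _ => h.dotProduct_mulVec_nonneg (u y'))).mp hsum0 y (Finset.mem_univ y)
  have hker : ρ *ᵥ u y = 0 := (h.dotProduct_mulVec_zero_iff (u y)).mp hterm0
  have hw := congrFun hker w
  simp only [Matrix.mulVec, dotProduct, hu, Fintype.sum_prod_type, mul_ite, mul_zero,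
    Finset.sum_ite_eq', Finset.mem_univ, if_true, Pi.zero_apply] at hw
  have h2 : ∀ x', ρ w (x', y) * v x'
      = (if x' = x₁ then ρ w (x₁, y) * (starRingEnd ℂ) (a x₂) else 0)
        + (if x' = x₂ then -(ρ w (x₂, y) * (starRingEnd ℂ) (a x₁)) else 0) := by
    intro x'
    simp only [hv]
    clear hw hker hterm0 hsum0 key hvsum h ha
    split_ifs <;> simp_all
  rw [Finset.sum_congr rfl (fun x' _ => h2 x'), Finset.sum_add_distrib] at hw
  simp only [Finset.sum_ite_eq', Finset.mem_univ, if_true] at hw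
  have : ρ w (x₁, y) * (starRingEnd ℂ) (a x₂) = ρ w (x₂, y) * (starRingEnd ℂ) (a x₁) := by
    linear_combination hw
  linear_combination this

lemma rel_snd [DecidableEq A] [DecidableEq B] {ρ : Matrix (A × B) (A × B) ℂ}
    (h : ρ.PosSemidef) {b : B → ℂ}
    (hb : rSnd ρ = Matrix.vecMulVec b (star b)) :
    ∀ (w : A × B) (y₁ y₂ : B) (x : A),
      (starRingEnd ℂ) (b y₂) * ρ w (x, y₁) = (starRingEnd ℂ) (b y₁) * ρ w (x, y₂) := by
  intro w y₁ y₂ x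
  have hs : rFst (ρ.submatrix Prod.swap Prod.swap) = Matrix.vecMulVec b (star b) := hb
  have := rel_of_rFst_pure (h.submatrix Prod.swap) hs w.swap y₁ y₂ x
  simpa using this

lemma pure_of_pure_marginals [DecidableEq A] [DecidableEq B] {ρ : Matrix (A × B) (A × B) ℂ}
    (h : ρ.PosSemidef) (htr : ρ.trace = 1) {a : A → ℂ} {b : B → ℂ}
    (ha : rFst ρ = Matrix.vecMulVec a (star a)) (hb : rSnd ρ = Matrix.vecMulVec b (star b)) :
    ∃ u : A × B → ℂ, ρ = Matrix.vecMulVec u (star u) := by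
  have htra : ∑ x, a x * (starRingEnd ℂ) (a x) = 1 := by
    have h1 : (rFst ρ).trace = ρ.trace := by
      simp [Matrix.trace, Matrix.diag, rFst, Fintype.sum_prod_type]
    rw [ha] at h1
    rw [htr] at h1
    simpa [Matrix.trace, Matrix.diag, Matrix.vecMulVec_apply] using h1
  have htrb : ∑ y, b y * (starRingEnd ℂ) (b y) = 1 := by
    have h1 : (rSnd ρ).trace = ρ.trace := by
      simp [Matrix.trace, Matrix.diag, rSnd, Fintype.sum_prod_type]
      rw [Finset.sum_comm]
    rw [hb] at h1
    rw [htr] at h1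
    simpa [Matrix.trace, Matrix.diag, Matrix.vecMulVec_apply] using h1
  obtain ⟨x₀, -, hx₀⟩ := Finset.exists_ne_zero_of_sum_ne_zero
    (show ∑ x, a x * (starRingEnd ℂ) (a x) ≠ 0 by rw [htra]; norm_num)
  obtain ⟨y₀, -, hy₀⟩ := Finset.exists_ne_zero_of_sum_ne_zero
    (show ∑ y, b y * (starRingEnd ℂ) (b y) ≠ 0 by rw [htrb]; norm_num)
  have hax₀ : (starRingEnd ℂ) (a x₀) ≠ 0 := fun hc => hx₀ (by simp [hc])
  have hby₀ : (starRingEnd ℂ) (b y₀) ≠ 0 := fun hc => hy₀ (by simp [hc])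
  have hA := rel_of_rFst_pure h ha
  have hB := rel_snd h hb
  set k : A × B → ℂ := fun w => ρ w (x₀, y₀) with hk
  have step1 : ∀ (w : A × B) (x : A) (y : B),
      (starRingEnd ℂ) (a x₀) * ((starRingEnd ℂ) (b y₀) * ρ w (x, y))
        = (starRingEnd ℂ) (a x) * ((starRingEnd ℂ) (b y) * k w) := by
    intro w x y
    rw [hB w y y₀ x]
    rw [show (starRingEnd ℂ) (a x₀) * ((starRingEnd ℂ) (b y) * ρ w (x, y₀))
        = (starRingEnd ℂ) (b y) * ((starRingEnd ℂ) (a x₀) * ρ w (x, y₀)) by ring]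
    rw [hA w x x₀ y₀]
    ring
  have step2 : ∀ (w : A × B) (x : A) (y : B),
      ρ w (x, y) = ((starRingEnd ℂ) (a x₀) * (starRingEnd ℂ) (b y₀))⁻¹
        * ((starRingEnd ℂ) (a x) * (starRingEnd ℂ) (b y) * k w) := by
    intro w x y
    have h1 := step1 w x y
    field_simp
    linear_combination h1
  set c := (starRingEnd ℂ) (a x₀) * (starRingEnd ℂ) (b y₀) with hc
  have hcne : c ≠ 0 := mul_ne_zero hax₀ hby₀
  have step3 : ∀ (x : A) (y : B),
      k (x, y) = (starRingEnd ℂ) c⁻¹ * (a x * b y * (starRingEnd ℂ) (k (x₀, y₀))) := by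
    intro x y
    have h1 : k (x, y) = star (ρ (x₀, y₀) (x, y)) := (h.1.apply _ _).symm
    rw [h1, step2 (x₀, y₀) x y]
    simp only [Complex.star_def, _root_.map_mul, map_inv₀, Complex.conj_conj, hc]
  have formula : ∀ (x x' : A) (y y' : B),
      ρ (x, y) (x', y') = (c⁻¹ * (starRingEnd ℂ) c⁻¹ * (starRingEnd ℂ) (k (x₀, y₀)))
        * (a x * b y * (starRingEnd ℂ) (a x') * (starRingEnd ℂ) (b y')) := by
    intro x x' y y'
    rw [step2 (x, y) x' y', step3 x y]
    ring
  set μ := c⁻¹ * (starRingEnd ℂ) c⁻¹ * (starRingEnd ℂ) (k (x₀, y₀)) with hμ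
  have hμ1 : μ = 1 := by
    have h1 : ∑ p : A × B, ρ p p
        = ∑ p : A × B, μ * ((a p.1 * (starRingEnd ℂ) (a p.1)) * (b p.2 * (starRingEnd ℂ) (b p.2))) := by
      refine Finset.sum_congr rfl fun p _ => ?_
      obtain ⟨x, y⟩ := p
      rw [formula x x y y]
      ring
    have h2 : ρ.trace = ∑ p : A × B, ρ p p := rfl
    rw [htr, h1, ← Finset.mul_sum, Fintype.sum_prod_type] at h2
    have h3 : ∑ x : A, ∑ y : B, (a x * (starRingEnd ℂ) (a x)) * (b y * (starRingEnd ℂ) (b y))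
        = (∑ x, a x * (starRingEnd ℂ) (a x)) * (∑ y, b y * (starRingEnd ℂ) (b y)) :=
      (Finset.sum_mul_sum _ _ _ _).symm
    rw [h3, htra, htrb, mul_one, mul_one] at h2
    exact h2.symm
  refine ⟨fun p => a p.1 * b p.2, ?_⟩
  ext ⟨x, y⟩ ⟨x', y'⟩
  rw [Matrix.vecMulVec_apply, formula x x' y y', hμ1, one_mul]
  simp only [Pi.star_apply, Complex.star_def, _root_.map_mul]
  ring

end Bipartite

section Rank
variable {A B : Type*} [Fintype A] [Fintype B] [DecidableEq A] [DecidableEq B]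

lemma rank_vecMulVec_le (u : A → ℂ) (v : B → ℂ) :
    (Matrix.vecMulVec u v).rank ≤ 1 := by
  rw [Matrix.vecMulVec_eq (Fin 1)]
  exact le_trans (Matrix.rank_mul_le_left _ _)
    (le_trans (Matrix.rank_le_card_width _) (by simp))

lemma rFst_eq_mul {ρ : Matrix (A × B) (A × B) ℂ} {w : A × B → ℂ}
    (hw : ρ = Matrix.vecMulVec w (star w)) :
    rFst ρ = (Matrix.of fun x y => w (x, y)) * (Matrix.of fun x y => w (x, y))ᴴ := by
  ext x x'
  simp [rFst, hw, Matrix.mul_apply, Matrix.vecMulVec_apply, Matrix.conjTranspose_apply]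

lemma rSnd_eq_mul {ρ : Matrix (A × B) (A × B) ℂ} {w : A × B → ℂ}
    (hw : ρ = Matrix.vecMulVec w (star w)) :
    rSnd ρ = (((Matrix.of fun x y => w (x, y))ᴴ * (Matrix.of fun x y => w (x, y)))ᴴ)ᵀ := by
  ext y y'
  simp [rSnd, hw, Matrix.mul_apply, Matrix.vecMulVec_apply, Matrix.conjTranspose_apply,
    Matrix.transpose_apply, map_sum, mul_comm]

lemma rank_rFst_eq_rank_rSnd {ρ : Matrix (A × B) (A × B) ℂ} {w : A × B → ℂ}
    (hw : ρ = Matrix.vecMulVec w (star w)) :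
    (rFst ρ).rank = (rSnd ρ).rank := by
  rw [rFst_eq_mul hw, rSnd_eq_mul hw, Matrix.rank_transpose, Matrix.rank_conjTranspose,
    Matrix.rank_self_mul_conjTranspose, Matrix.rank_conjTranspose_mul_self]

lemma rank_rFst_le_card {ρ : Matrix (A × B) (A × B) ℂ} {w : A × B → ℂ}
    (hw : ρ = Matrix.vecMulVec w (star w)) :
    (rFst ρ).rank ≤ Fintype.card B := by
  rw [rFst_eq_mul hw]
  exact le_trans (Matrix.rank_mul_le_left _ _) (Matrix.rank_le_card_width _)

end Rank

/-! ### Glue between `reduce` and the bipartite picture -/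

section Glue
variable {n : ℕ} {d : Fin n → ℕ}

def emb (J : Finset (Fin n)) (x : ∀ i : {i : Fin n // i ∈ J}, Fin (d i.1))
    (y : ∀ j : {j : Fin n // j ∉ J}, Fin (d j.1)) : ∀ i, Fin (d i) :=
  fun i => if h : i ∈ J then x ⟨i, h⟩ else y ⟨i, h⟩

def embEquiv (J : Finset (Fin n)) :
    ((∀ i : {i : Fin n // i ∈ J}, Fin (d i.1)) × (∀ j : {j : Fin n // j ∉ J}, Fin (d j.1)))
      ≃ (∀ i, Fin (d i)) where
  toFun p := emb J p.1 p.2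
  invFun z := ⟨fun i => z i.1, fun j => z j.1⟩
  left_inv p := by
    refine Prod.ext ?_ ?_ <;> funext i <;> simp [emb, i.2]
  right_inv z := by
    funext i
    simp only [emb]
    split_ifs <;> rfl

lemma reduce_eq_rFst (ρ : Matrix (∀ i, Fin (d i)) (∀ i, Fin (d i)) ℂ) (J : Finset (Fin n)) :
    reduce ρ J = rFst (ρ.submatrix (embEquiv J) (embEquiv J)) := rfl

def Yf (J : Finset (Fin n)) (u : ∀ i : {i : Fin n // i ∈ Jᶜ}, Fin (d i.1)) :
    ∀ j : {j : Fin n // j ∉ J}, Fin (d j.1) :=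
  fun j => u ⟨j.1, Finset.mem_compl.mpr j.2⟩

def Yinv (J : Finset (Fin n)) (w : ∀ j : {j : Fin n // j ∉ J}, Fin (d j.1)) :
    ∀ i : {i : Fin n // i ∈ Jᶜ}, Fin (d i.1) :=
  fun i => w ⟨i.1, Finset.mem_compl.mp i.2⟩

lemma reduce_compl_eq (ρ : Matrix (∀ i, Fin (d i)) (∀ i, Fin (d i)) ℂ) (J : Finset (Fin n))
    (u u' : ∀ i : {i : Fin n // i ∈ Jᶜ}, Fin (d i.1)) :
    reduce ρ Jᶜ u u'
      = rSnd (ρ.submatrix (embEquiv J) (embEquiv J)) (Yf J u) (Yf J u') := by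
  have hX : Function.Bijective
      (fun (t : ∀ j : {j : Fin n // j ∉ Jᶜ}, Fin (d j.1)) =>
        (fun i : {i : Fin n // i ∈ J} => t ⟨i.1, by simp [i.2]⟩)) := by
    constructor
    · intro t t' h
      funext j
      exact congrFun h ⟨j.1, by simpa using j.2⟩
    · intro s
      exact ⟨fun j => s ⟨j.1, by simpa using j.2⟩, rfl⟩
  refine Fintype.sum_bijective _ hX _ _ ?_
  intro t
  have hemb : ∀ (v : ∀ i : {i : Fin n // i ∈ Jᶜ}, Fin (d i.1)),
      (fun i => if h : i ∈ Jᶜ then v ⟨i, h⟩ else t ⟨i, h⟩)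
        = emb J (fun i : {i : Fin n // i ∈ J} => t ⟨i.1, by simp [i.2]⟩) (Yf J v) := by
    intro v
    funext i
    by_cases hi : i ∈ J
    · rw [dif_neg (by simp [hi]), emb, dif_pos hi]
    · rw [dif_pos (Finset.mem_compl.mpr hi), emb, dif_neg hi]
      rfl
  show ρ _ _ = ρ.submatrix _ _ (_, Yf J u) (_, Yf J u')
  rw [Matrix.submatrix_apply]
  exact congrArg₂ ρ (hemb u) (hemb u')

lemma rSnd_pure (ρ : Matrix (∀ i, Fin (d i)) (∀ i, Fin (d i)) ℂ) (J : Finset (Fin n))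
    {b : (∀ i : {i : Fin n // i ∈ Jᶜ}, Fin (d i.1)) → ℂ}
    (hb : reduce ρ Jᶜ = Matrix.vecMulVec b (star b)) :
    rSnd (ρ.submatrix (embEquiv J) (embEquiv J))
      = Matrix.vecMulVec (b ∘ Yinv J) (star (b ∘ Yinv J)) := by
  ext y y'
  have h1 := reduce_compl_eq ρ J (Yinv J y) (Yinv J y')
  have h2 : Yf J (Yinv J y) = y := rfl
  have h3 : Yf J (Yinv J y') = y' := rfl
  rw [h2, h3] at h1
  rw [← h1, hb]
  rfl

lemma density_submatrix {ι κ : Type*} [Fintype ι] [Fintype κ] (e : κ ≃ ι)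
    {ρ : Matrix ι ι ℂ} (h : IsDensityMatrix ρ) : IsDensityMatrix (ρ.submatrix e e) := by
  refine ⟨h.1.submatrix e, ?_⟩
  rw [← h.2]
  exact Fintype.sum_equiv e _ _ (fun p => rfl)

lemma density_reduce {ρ : Matrix (∀ i, Fin (d i)) (∀ i, Fin (d i)) ℂ}
    (h : IsDensityMatrix ρ) (J : Finset (Fin n)) : IsDensityMatrix (reduce ρ J) := by
  rw [reduce_eq_rFst]
  exact density_rFst (density_submatrix _ h)

end Glue
end RAA

open RAA in
/-- Remark 1: for `n ≥ 2`, no state attains the axis vector `s·δ_I` exactly. -/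
theorem renyi_axis_not_attained (α : ℝ) (hα0 : 0 < α) (hα1 : α < 1)
    (n : ℕ) (hn : 2 ≤ n) (I : Finset (Fin n)) (hI : I.Nonempty)
    (s : ℝ) (hs : 0 < s) :
    ¬ ∃ (d : Fin n → ℕ) (ρ : Matrix (∀ i, Fin (d i)) (∀ i, Fin (d i)) ℂ),
        IsDensityMatrix ρ ∧
        renyiS α (reduce ρ I) = s ∧
        ∀ J : Finset (Fin n), J.Nonempty → J ≠ I → renyiS α (reduce ρ J) = 0 := by
  rintro ⟨d, ρ, hρ, hIs, hothers⟩
  haveI : IsEmpty {j : Fin n // j ∉ (Finset.univ : Finset (Fin n))} :=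
    ⟨fun j => j.2 (Finset.mem_univ j.1)⟩
  by_cases hIu : I = Finset.univ
  · -- `I` is everything: all single-party (and complementary) reductions are pure,
    -- hence the global state is pure and has zero entropy.
    subst hIu
    have h0n : 0 < n := by omega
    have h1n : 1 < n := by omega
    set i₀ : Fin n := ⟨0, h0n⟩ with hi₀
    set J : Finset (Fin n) := {i₀} with hJdef
    have hJne : J.Nonempty := ⟨i₀, Finset.mem_singleton_self i₀⟩
    have hJI : J ≠ Finset.univ := by
      intro hc
      have h1 : J.card = 1 := Finset.card_singleton i₀
      rw [hc, Finset.card_univ, Fintype.card_fin] at h1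
      omega
    have hJcne : Jᶜ.Nonempty := by
      refine ⟨⟨1, h1n⟩, Finset.mem_compl.mpr ?_⟩
      simp [hJdef, Fin.ext_iff]
    have hJcI : Jᶜ ≠ Finset.univ := by
      intro hc
      have h2 : i₀ ∈ Jᶜ := hc ▸ Finset.mem_univ i₀
      simp [hJdef] at h2
    have hDJ := density_reduce hρ J
    have hDJc := density_reduce hρ Jᶜ
    obtain ⟨a, hA⟩ := density_vecMulVec_of_eigs hDJ
      (eigs_of_renyi_zero hDJ hα0 hα1 (hothers J hJne hJI))
    obtain ⟨b, hBv⟩ := density_vecMulVec_of_eigs hDJc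
      (eigs_of_renyi_zero hDJc hα0 hα1 (hothers Jᶜ hJcne hJcI))
    have hρ' := density_submatrix (embEquiv J) hρ
    have haF : rFst (ρ.submatrix (embEquiv J) (embEquiv J)) = Matrix.vecMulVec a (star a) := by
      rw [← reduce_eq_rFst]
      exact hA
    have hbS := rSnd_pure ρ J hBv
    obtain ⟨u, hu⟩ := pure_of_pure_marginals hρ'.1 hρ'.2 haF hbS
    have hρpure : ρ = Matrix.vecMulVec (u ∘ (embEquiv J).symm)
        (star (u ∘ (embEquiv J).symm)) := by
      ext z z'
      have h1 := congrFun (congrFun hu ((embEquiv J).symm z)) ((embEquiv J).symm z')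
      rw [Matrix.submatrix_apply, Equiv.apply_symm_apply, Equiv.apply_symm_apply] at h1
      exact h1
    have hpure' : ρ.submatrix (embEquiv Finset.univ) (embEquiv Finset.univ)
        = Matrix.vecMulVec (u ∘ (embEquiv J).symm ∘ (embEquiv Finset.univ))
            (star (u ∘ (embEquiv J).symm ∘ (embEquiv Finset.univ))) := by
      ext p q
      rw [Matrix.submatrix_apply, hρpure]
      rfl
    have hrank : (reduce ρ Finset.univ).rank ≤ 1 := by
      rw [reduce_eq_rFst]
      exact le_trans (rank_rFst_le_card hpure') Fintype.card_unique.le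
    have hD := density_reduce hρ Finset.univ
    have hz := renyi_zero_of_eigs hα0 hD.1.1 (eigs_of_rank_le_one hD hrank)
    rw [hIs] at hz
    linarith
  · -- `I` is proper: the global state is pure (from `J = univ`), so the nonzero spectra of
    -- `ρ_I` and `ρ_{Iᶜ}` agree; the latter is pure, hence `ρ_I` is pure as well.
    have hu_ne : (Finset.univ : Finset (Fin n)).Nonempty := ⟨⟨0, by omega⟩, Finset.mem_univ _⟩
    have hDu := density_reduce hρ Finset.univ
    obtain ⟨w0, hW⟩ := density_vecMulVec_of_eigs hDu
      (eigs_of_renyi_zero hDu hα0 hα1 (hothers Finset.univ hu_ne (fun hc => hIu hc.symm)))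
    have hq : ∀ z z' : (∀ i, Fin (d i)), ρ z z'
        = reduce ρ Finset.univ (fun i => z i.1) (fun i => z' i.1) := by
      intro z z'
      simp only [reduce]
      rw [Fintype.sum_unique]
      refine congrArg₂ ρ ?_ ?_ <;> funext i <;>
        rw [dif_pos (Finset.mem_univ i)]
    set W : (∀ i, Fin (d i)) → ℂ :=
      fun z => w0 (fun i : {i : Fin n // i ∈ (Finset.univ : Finset (Fin n))} => z i.1) with hWdef
    have hρpure : ρ = Matrix.vecMulVec W (star W) := by
      ext z z'
      calc ρ z z' = reduce ρ Finset.univ (fun i => z i.1) (fun i => z' i.1) := hq z z'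
        _ = Matrix.vecMulVec W (star W) z z' := by rw [hW]; rfl
    have hpure' : ρ.submatrix (embEquiv I) (embEquiv I)
        = Matrix.vecMulVec (W ∘ (embEquiv I)) (star (W ∘ (embEquiv I))) := by
      ext p q
      rw [Matrix.submatrix_apply, hρpure]
      rfl
    have hIc_ne : Iᶜ.Nonempty := by
      rw [Finset.nonempty_iff_ne_empty]
      intro hc
      exact hIu ((Finset.compl_eq_empty_iff I).mp hc)
    have hIcI : Iᶜ ≠ I := by
      intro hc
      obtain ⟨i, hi⟩ := hI
      have h2 : i ∈ Iᶜ := hc.symm ▸ hi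
      exact Finset.mem_compl.mp h2 hi
    have hDc := density_reduce hρ Iᶜ
    obtain ⟨b, hBv⟩ := density_vecMulVec_of_eigs hDc
      (eigs_of_renyi_zero hDc hα0 hα1 (hothers Iᶜ hIc_ne hIcI))
    have hbS := rSnd_pure ρ I hBv
    have hrank : (reduce ρ I).rank ≤ 1 := by
      rw [reduce_eq_rFst, rank_rFst_eq_rank_rSnd hpure', hbS]
      exact RAA.rank_vecMulVec_le _ _
    have hD := density_reduce hρ I
    have hz := renyi_zero_of_eigs hα0 hD.1.1 (eigs_of_rank_le_one hD hrank)
    rw [hIs] at hz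
    linarith

end
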